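/- For n ≥ 0, B_n^{(k)}(x) = Σ_{j=0}^{n} [Σ_{m=0}^{n-j} ((-1)^{n-m-j}/(m+1)^k) C(n,j) m! S₂(n-j,m)] x^j. -/

import Mathlib

open PowerSeries Finset

/-- e^{xt} as a formal power series. -/
noncomputable def expX (x : ℂ) : PowerSeries ℂ := rescale x (exp ℂ)

/-- 1 - e^{-t} as a formal power series. -/
noncomputable def oneSubExpNeg : PowerSeries ℂ := 1 - rescale (-1) (exp ℂ)

/-- Li_k(1-e^{-t}) = Σ_{m≥1} (1-e^{-t})^m / m^k as a formal power series. -/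
noncomputable def polyLogC (k : ℤ) : PowerSeries ℂ :=
  mk fun n => ∑ m ∈ Finset.Icc 1 n, (coeff n (oneSubExpNeg ^ m)) * ((m : ℂ) ^ k)⁻¹

/-- integer power of a power series (inverse via `PowerSeries.inv`). -/
noncomputable def zpowS (f : PowerSeries ℂ) (r : ℤ) : PowerSeries ℂ :=
  f ^ r.toNat * (f⁻¹) ^ (-r).toNat

/-- (1-λ)/(e^t-λ). -/
noncomputable def feBase (l : ℂ) : PowerSeries ℂ :=
  C (1 - l) * (exp ℂ - C l)⁻¹

/-- exponential generating function Σ f(n) t^n/n!. -/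
noncomputable def GF (f : ℕ → ℂ) : PowerSeries ℂ := mk fun n => f n / n.factorial

/-- Stirling numbers of the second kind: (e^t-1)^m = m! Σ_l S2(l,m) t^l/l!. -/
noncomputable def S2 (n m : ℕ) : ℂ :=
  (n.factorial : ℂ) / (m.factorial : ℂ) * coeff n ((exp ℂ - 1) ^ m)

lemma osEN_eq : oneSubExpNeg = - (rescale (-1) (exp ℂ - 1)) := by
  rw [oneSubExpNeg, map_sub, map_one]; ring

lemma constCoeff_osEN : constantCoeff oneSubExpNeg = 0 := by
  rw [← PowerSeries.coeff_zero_eq_constantCoeff_apply, oneSubExpNeg, map_sub, coeff_rescale,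
    PowerSeries.coeff_exp]
  norm_num

lemma coeff_osEN_pow_zero {m l : ℕ} (h : l < m) : coeff l (oneSubExpNeg ^ m) = 0 := by
  have hd : (X : PowerSeries ℂ) ^ m ∣ oneSubExpNeg ^ m :=
    pow_dvd_pow_of_dvd (PowerSeries.X_dvd_iff.mpr constCoeff_osEN) m
  exact PowerSeries.X_pow_dvd_iff.mp hd l h

lemma coeff_osEN_pow (l m : ℕ) :
    coeff l (oneSubExpNeg ^ m) = (-1 : ℂ) ^ (l + m) * (m.factorial : ℂ) * S2 l m / (l.factorial : ℂ) := by
  have hC : ((-1 : ℂ⟦X⟧)) = C (-1) := by simp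
  rw [osEN_eq, neg_pow, hC, ← map_pow, coeff_C_mul, ← map_pow, coeff_rescale, S2]
  have h1 : ((l.factorial : ℂ)) ≠ 0 := Nat.cast_ne_zero.mpr l.factorial_ne_zero
  have h2 : ((m.factorial : ℂ)) ≠ 0 := Nat.cast_ne_zero.mpr m.factorial_ne_zero
  field_simp
  ring

lemma osEN_ne : oneSubExpNeg ≠ 0 := fun h => by
  have h1 : coeff 1 oneSubExpNeg = 1 := by
    simp [oneSubExpNeg, coeff_rescale, PowerSeries.coeff_exp]
  rw [h] at h1; simp at h1

noncomputable def Fser (k : ℤ) : PowerSeries ℂ :=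
  mk fun n => ∑ m ∈ range (n + 1), coeff n (oneSubExpNeg ^ m) * (((m : ℂ) + 1) ^ k)⁻¹

lemma claimA (k : ℤ) : polyLogC k = oneSubExpNeg * Fser k := by
  ext n
  rw [polyLogC, coeff_mk, coeff_mul, Finset.Nat.sum_antidiagonal_eq_sum_range_succ_mk]
  simp only [Fser, coeff_mk, Finset.mul_sum]
  have hext : ∀ i ∈ range (n + 1),
      ∑ m ∈ range (n - i + 1), coeff i oneSubExpNeg * (coeff (n - i) (oneSubExpNeg ^ m) * (((m : ℂ) + 1) ^ k)⁻¹)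
      = ∑ m ∈ range (n + 1), coeff i oneSubExpNeg * (coeff (n - i) (oneSubExpNeg ^ m) * (((m : ℂ) + 1) ^ k)⁻¹) := by
    intro i hi
    refine Finset.sum_subset ?_ ?_
    · exact Finset.range_subset_range.mpr (by omega)
    intro m hm hm'
    have hlt : n - i < m := by
      simp only [Finset.mem_range] at hm'
      omega
    rw [coeff_osEN_pow_zero hlt]; ring
  rw [Finset.sum_congr rfl hext, Finset.sum_comm]
  have hcoe : ∀ m : ℕ, ∑ i ∈ range (n + 1), coeff i oneSubExpNeg * coeff (n - i) (oneSubExpNeg ^ m)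
      = coeff n (oneSubExpNeg ^ (m + 1)) := by
    intro m
    rw [pow_succ', coeff_mul, Finset.Nat.sum_antidiagonal_eq_sum_range_succ_mk]
  calc ∑ m ∈ Finset.Icc 1 n, coeff n (oneSubExpNeg ^ m) * ((m : ℂ) ^ k)⁻¹
      = ∑ m ∈ range (n + 1), coeff n (oneSubExpNeg ^ (m + 1)) * (((m : ℂ) + 1) ^ k)⁻¹ := by
        rw [Finset.sum_range_succ, coeff_osEN_pow_zero (Nat.lt_succ_self n), zero_mul, add_zero]
        rw [show Finset.Icc 1 n = Finset.Ico 1 (n + 1) from rfl, Finset.sum_Ico_eq_sum_range]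
        simp only [Nat.add_sub_cancel]
        refine Finset.sum_congr rfl fun m hm => ?_
        rw [add_comm 1 m]
        push_cast
        ring_nf
    _ = _ := by
        refine Finset.sum_congr rfl fun m hm => ?_
        rw [← hcoe m, Finset.sum_mul]
        exact Finset.sum_congr rfl fun i hi => by ring

lemma factS (i m : ℕ) (h : m ≤ i) : (-1 : ℂ) ^ (i - m) = (-1) ^ (i + m) := by
  rw [show i + m = (i - m) + 2 * m by omega, pow_add, pow_mul]
  norm_num

lemma coeff_expX (x : ℂ) (n : ℕ) : coeff n (expX x) = x ^ n / n.factorial := by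
  rw [expX, coeff_rescale, PowerSeries.coeff_exp]
  push_cast
  ring

lemma claimB (k : ℤ) (x : ℂ) :
    Fser k * expX x = GF (fun n => ∑ j ∈ range (n + 1),
      (∑ m ∈ range (n - j + 1), (-1 : ℂ) ^ (n - m - j) * (((m : ℂ) + 1) ^ k)⁻¹ *
        (n.choose j : ℂ) * (m.factorial : ℂ) * S2 (n - j) m) * x ^ j) := by
  ext n
  rw [coeff_mul, Finset.Nat.sum_antidiagonal_eq_sum_range_succ_mk, GF, coeff_mk,
    Finset.sum_div, ← Finset.sum_range_reflect]
  refine Finset.sum_congr rfl fun i hi => ?_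
  rw [Finset.mem_range] at hi
  have hi' : i ≤ n := by omega
  rw [show n + 1 - 1 - i = n - i from by omega, Nat.sub_sub_self hi', coeff_expX]
  simp only [Fser, coeff_mk]
  rw [Finset.sum_mul, Finset.sum_mul, Finset.sum_div]
  refine Finset.sum_congr rfl fun m hm => ?_
  rw [Finset.mem_range] at hm
  have hm' : m ≤ n - i := by omega
  rw [coeff_osEN_pow, show n - m - i = n - i - m from by omega, factS (n - i) m hm']
  have h1 : ((i.factorial : ℂ)) ≠ 0 := Nat.cast_ne_zero.mpr i.factorial_ne_zero
  have h2 : (((n - i).factorial : ℂ)) ≠ 0 := Nat.cast_ne_zero.mpr (n - i).factorial_ne_zero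
  have h3 : ((n.choose i : ℕ) : ℂ) ≠ 0 :=
    Nat.cast_ne_zero.mpr (Nat.choose_pos hi').ne'
  have hz : (((m : ℂ) + 1) ^ k) ≠ 0 := by
    exact zpow_ne_zero _ (Nat.cast_add_one_ne_zero m)
  have hn : ((n.factorial : ℂ)) = (n.choose i : ℂ) * i.factorial * (n - i).factorial := by
    exact_mod_cast (Nat.choose_mul_factorial_mul_factorial hi').symm
  rw [hn]
  field_simp

theorem stmt16 (k : ℤ) (B : ℕ → ℂ → ℂ)
    (hB : ∀ x : ℂ, oneSubExpNeg * GF (fun n => B n x) = polyLogC (k) * expX x) :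
    ∀ (n : ℕ) (x : ℂ),
      B n x = ∑ j ∈ range (n + 1),
        (∑ m ∈ range (n - j + 1), (-1 : ℂ) ^ (n - m - j) * (((m : ℂ) + 1) ^ k)⁻¹ *
          (n.choose j : ℂ) * (m.factorial : ℂ) * S2 (n - j) m) * x ^ j := by
  intro n x
  have h1 : oneSubExpNeg * GF (fun n => B n x) = oneSubExpNeg *
      GF (fun n => ∑ j ∈ range (n + 1),
        (∑ m ∈ range (n - j + 1), (-1 : ℂ) ^ (n - m - j) * (((m : ℂ) + 1) ^ k)⁻¹ *
          (n.choose j : ℂ) * (m.factorial : ℂ) * S2 (n - j) m) * x ^ j) := by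
    rw [hB x, claimA, mul_assoc, claimB]
  have h2 := mul_left_cancel₀ osEN_ne h1
  have h3 := congrArg (coeff n) h2
  simp only [GF, coeff_mk] at h3
  have hf : ((n.factorial : ℂ)) ≠ 0 := Nat.cast_ne_zero.mpr n.factorial_ne_zero
  rw [div_eq_div_iff hf hf] at h3
  exact mul_right_cancel₀ hf h3
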